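/- arXiv:1604.02405 — 11 statements merged into one kernel-verified Lean document; each statement's English description precedes it below -/
import Mathlib

section
/- Coarse property C is a coarse invariant: if f : X → Y is a coarsely uniform embedding of coarse spaces and Y has coarse property C, then X has coarse property C. In particular, coarsely equivalent coarse spaces either both have or both lack coarse property C. -/
open Set
open scoped ENNReal

universe u v

/-- A coarse structure on a set `X`: a collection of entourages closed under
subsets, finite unions, inverses and compositions, containing the diagonal. -/
structure CoarseStructure (X : Type u) where
  IsEnt : Set (X × X) → Prop
  subset_mem : ∀ {E F : Set (X × X)}, IsEnt F → E ⊆ F → IsEnt E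
  union_mem : ∀ {E F : Set (X × X)}, IsEnt E → IsEnt F → IsEnt (E ∪ F)
  diag_mem : IsEnt {p : X × X | p.1 = p.2}
  inv_mem : ∀ {E : Set (X × X)}, IsEnt E → IsEnt {p : X × X | (p.2, p.1) ∈ E}
  comp_mem : ∀ {E F : Set (X × X)}, IsEnt E → IsEnt F →
    IsEnt {p : X × X | ∃ y, (p.1, y) ∈ E ∧ (y, p.2) ∈ F}

variable {X : Type u} {Y : Type v}

/-- Composition of relations. -/
def rcomp (E F : Set (X × X)) : Set (X × X) :=
  {p : X × X | ∃ y, (p.1, y) ∈ E ∧ (y, p.2) ∈ F}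

/-- Iterated composition `E^k`, with `E^0` the diagonal. -/
def rpow (E : Set (X × X)) : ℕ → Set (X × X)
  | 0 => {p : X × X | p.1 = p.2}
  | k + 1 => rcomp (rpow E k) E

/-- A relation is symmetric if it equals its inverse. -/
def SymmRel (E : Set (X × X)) : Prop := ∀ p : X × X, p ∈ E → (p.2, p.1) ∈ E

/-- `Δ_U = ⋃_{A ∈ U} A × A`. -/
def famDiag (U : Set (Set X)) : Set (X × X) := ⋃ A ∈ U, A ×ˢ A

/-- A family of subsets is uniformly bounded if `⋃ A × A` is an entourage. -/
def UnifBdd (C : CoarseStructure X) (U : Set (Set X)) : Prop := C.IsEnt (famDiag U)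

/-- A family of subsets is `L`-disjoint. -/
def LDisj (L : Set (X × X)) (U : Set (Set X)) : Prop :=
  ∀ A ∈ U, ∀ B ∈ U, A ≠ B → (A ×ˢ B) ∩ L = ∅

/-- Coarse property C. -/
def CoarsePropC (C : CoarseStructure X) : Prop :=
  ∀ L : ℕ → Set (X × X), (∀ i, C.IsEnt (L i)) → (∀ i, L i ⊆ L (i + 1)) →
    ∃ n : ℕ, ∃ U : ℕ → Set (Set X),
      (∀ x : X, ∃ i < n, ∃ A ∈ U i, x ∈ A) ∧
      (∀ i < n, UnifBdd C (U i)) ∧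
      (∀ i < n, LDisj (L i) (U i))

/-- Coarse property C for a subspace `S ⊆ X` (with the inherited coarse structure). -/
def CoarsePropCOn (C : CoarseStructure X) (S : Set X) : Prop :=
  ∀ L : ℕ → Set (X × X), (∀ i, C.IsEnt (L i)) → (∀ i, L i ⊆ L (i + 1)) →
    ∃ n : ℕ, ∃ U : ℕ → Set (Set X),
      (∀ i < n, ∀ A ∈ U i, A ⊆ S) ∧
      (∀ x ∈ S, ∃ i < n, ∃ A ∈ U i, x ∈ A) ∧
      (∀ i < n, UnifBdd C (U i)) ∧
      (∀ i < n, LDisj (L i) (U i))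

/-- Coarse asymptotic dimension at most `n`. -/
def CoarseASDimLE (C : CoarseStructure X) (n : ℕ) : Prop :=
  ∀ L : Set (X × X), C.IsEnt L → ∃ U : ℕ → Set (Set X),
    (∀ x : X, ∃ i ≤ n, ∃ A ∈ U i, x ∈ A) ∧
    (∀ i ≤ n, UnifBdd C (U i)) ∧
    (∀ i ≤ n, LDisj L (U i))

/-- The extended natural-valued metric `D(x,y) = min {k : (x,y) ∈ E^k}` induced by `E`. -/
noncomputable def eDist (E : Set (X × X)) (x y : X) : ℕ∞ :=
  sInf ((fun k : ℕ => (k : ℕ∞)) '' {k : ℕ | (x, y) ∈ rpow E k})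

/-- Distance from a point to a set, for the metric induced by `E`. -/
noncomputable def eDistSet (E : Set (X × X)) (x : X) (A : Set X) : ℕ∞ :=
  sInf (eDist E x '' A)

/-- `ℝ≥0∞`-valued version of the metric induced by `E`. -/
noncomputable def nDist (E : Set (X × X)) (x y : X) : ℝ≥0∞ :=
  sInf ((fun k : ℕ => (k : ℝ≥0∞)) '' {k : ℕ | (x, y) ∈ rpow E k})

/-- `ℝ≥0∞`-valued distance from a point to a set. -/
noncomputable def nDistSet (E : Set (X × X)) (x : X) (A : Set X) : ℝ≥0∞ :=
  sInf (nDist E x '' A)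

/-- The map `f × f`. -/
def mapProd (f : X → Y) : X × X → Y × Y := fun p => (f p.1, f p.2)

/-- Bornologous maps: images of entourages are entourages. -/
def Bornologous (CX : CoarseStructure X) (CY : CoarseStructure Y) (f : X → Y) : Prop :=
  ∀ E : Set (X × X), CX.IsEnt E → CY.IsEnt (mapProd f '' E)

/-- Proper maps: preimages of bounded sets are bounded. -/
def ProperCoarse (CX : CoarseStructure X) (CY : CoarseStructure Y) (f : X → Y) : Prop :=
  ∀ B : Set Y, CY.IsEnt (B ×ˢ B) → CX.IsEnt ((f ⁻¹' B) ×ˢ (f ⁻¹' B))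

/-- A coarse map is proper and bornologous. -/
def CoarseMap (CX : CoarseStructure X) (CY : CoarseStructure Y) (f : X → Y) : Prop :=
  ProperCoarse CX CY f ∧ Bornologous CX CY f

/-- A coarsely uniform embedding. -/
def CoarseUnifEmb (CX : CoarseStructure X) (CY : CoarseStructure Y) (f : X → Y) : Prop :=
  ProperCoarse CX CY f ∧ Bornologous CX CY f ∧
    ∀ F : Set (Y × Y), CY.IsEnt F → CX.IsEnt (mapProd f ⁻¹' F)

/-- Two maps are close if the set of pairs of their values is an entourage. -/
def Close (C : CoarseStructure X) (f g : Y → X) : Prop :=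
  C.IsEnt (Set.range fun y => (f y, g y))

/-- Coarse equivalence of coarse spaces. -/
def CoarseEquiv (CX : CoarseStructure X) (CY : CoarseStructure Y) : Prop :=
  ∃ f : X → Y, ∃ g : Y → X, CoarseMap CX CY f ∧ CoarseMap CY CX g ∧
    Close CX (g ∘ f) id ∧ Close CY (f ∘ g) id

/-- A weak `(L,d)`-decomposition of the set `Z` over the family `Y`. -/
def WeakDecomp (L : Set (X × X)) (d : ℕ) (Z : Set X) (Y : Set (Set X)) : Prop :=
  ∃ P : Fin d → Set (Set X), (∀ i, P i ⊆ Y) ∧ (∀ i, LDisj L (P i)) ∧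
    Z = ⋃ i, ⋃ A ∈ P i, A

/-- A family admits a weak `(L,d)`-decomposition over `Y` if each member does. -/
def FamDecomp (L : Set (X × X)) (d : ℕ) (F Y : Set (Set X)) : Prop :=
  ∀ Z ∈ F, WeakDecomp L d Z Y

/-- Straight finite coarse decomposition complexity of a family of subsets. -/
def sFCDC (C : CoarseStructure X) (F : Set (Set X)) : Prop :=
  ∀ L : ℕ → Set (X × X), (∀ i, C.IsEnt (L i)) → (∀ i, L i ⊆ L (i + 1)) →
    ∃ n : ℕ, ∃ Y : ℕ → Set (Set X), Y 0 = F ∧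
      (∀ i < n, FamDecomp (L i) 2 (Y i) (Y (i + 1))) ∧ UnifBdd C (Y n)

/-- Finite weak coarse decomposition complexity (one-step form). -/
def FWCDC (C : CoarseStructure X) : Prop :=
  ∀ L : Set (X × X), C.IsEnt L →
    ∃ d : ℕ, ∃ Y : Set (Set X), UnifBdd C Y ∧ WeakDecomp L d Set.univ Y

/-- `N_L(V, U)`. -/
def NL (L : Set (X × X)) (U : Set (Set X)) (V : Set X) : Set X :=
  V ∪ ⋃ A ∈ {A ∈ U | ((A ×ˢ V) ∩ L).Nonempty}, A

/-- The `L`-saturated union `V ∪_L U`. -/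
def satUnion (L : Set (X × X)) (V U : Set (Set X)) : Set (Set X) :=
  (NL L U '' V) ∪ {A ∈ U | ∀ W ∈ V, (A ×ˢ W) ∩ L = ∅}

/-- The bounded coarse structure of a (pseudo)metric space. -/
def boundedCoarse (X : Type u) [PseudoMetricSpace X] : CoarseStructure X where
  IsEnt E := ∃ R : ℝ, ∀ p ∈ E, dist p.1 p.2 ≤ R
  subset_mem := fun h hsub => ⟨h.choose, fun p hp => h.choose_spec p (hsub hp)⟩
  union_mem := fun hE hF => ⟨max hE.choose hF.choose, by
    rintro p (hp | hp)
    · exact (hE.choose_spec p hp).trans (le_max_left _ _)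
    · exact (hF.choose_spec p hp).trans (le_max_right _ _)⟩
  diag_mem := ⟨0, by
    rintro ⟨a, b⟩ hab
    simp only [Set.mem_setOf_eq] at hab
    simp [hab]⟩
  inv_mem := fun hE => ⟨hE.choose, by
    intro p hp
    rw [dist_comm]
    exact hE.choose_spec _ hp⟩
  comp_mem := fun hE hF => ⟨hE.choose + hF.choose, by
    rintro p ⟨y, h1, h2⟩
    calc dist p.1 p.2 ≤ dist p.1 y + dist y p.2 := dist_triangle _ _ _
      _ ≤ _ := add_le_add (hE.choose_spec _ h1) (hF.choose_spec _ h2)⟩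

/-- Uniformly bounded family of subsets of a metric space. -/
def MUnifBdd {X : Type u} [PseudoMetricSpace X] (U : Set (Set X)) : Prop :=
  ∃ B : ℝ, ∀ A ∈ U, ∀ x ∈ A, ∀ y ∈ A, dist x y ≤ B

/-- `R`-disjoint family of subsets of a metric space. -/
def MDisj {X : Type u} [PseudoMetricSpace X] (R : ℝ) (U : Set (Set X)) : Prop :=
  ∀ A ∈ U, ∀ B ∈ U, A ≠ B → ∀ x ∈ A, ∀ y ∈ B, R < dist x y

/-- Asymptotic property C of a metric space. -/
def AsympPropC (X : Type u) [PseudoMetricSpace X] : Prop :=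
  ∀ R : ℕ → ℝ, (∀ i, 0 < R i) → (∀ i, R i ≤ R (i + 1)) →
    ∃ n : ℕ, ∃ U : ℕ → Set (Set X),
      (∀ x : X, ∃ i < n, ∃ A ∈ U i, x ∈ A) ∧
      (∀ i < n, MUnifBdd (U i)) ∧
      (∀ i < n, MDisj (R i) (U i))

/-- Coercion of pairs in a subspace to pairs in the ambient space. -/
def sprod (S : Set X) : S × S → X × X := fun p => ((p.1 : X), (p.2 : X))

/-- The subspace coarse structure. -/
def CoarseStructure.restrict (C : CoarseStructure X) (S : Set X) : CoarseStructure S where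
  IsEnt E := C.IsEnt (sprod S '' E)
  subset_mem := fun h hsub => C.subset_mem h (Set.image_mono hsub)
  union_mem := fun {E F} h1 h2 => by
    show C.IsEnt (sprod S '' (E ∪ F))
    rw [Set.image_union]; exact C.union_mem h1 h2
  diag_mem := C.subset_mem C.diag_mem (by
    rintro q ⟨p, hp, rfl⟩
    simp only [Set.mem_setOf_eq] at hp ⊢
    exact congrArg Subtype.val hp)
  inv_mem := fun {E} h => C.subset_mem (C.inv_mem h) (by
    rintro q ⟨p, hp, rfl⟩
    exact ⟨(p.2, p.1), hp, rfl⟩)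
  comp_mem := fun {E F} hE hF => C.subset_mem (C.comp_mem hE hF) (by
    rintro q ⟨p, ⟨y, h1, h2⟩, rfl⟩
    exact ⟨(y : X), ⟨(p.1, y), h1, rfl⟩, ⟨(y, p.2), h2, rfl⟩⟩)

/-- First-coordinate projection of a relation on a product. -/
def pfst : (X × Y) × (X × Y) → X × X := fun p => (p.1.1, p.2.1)

/-- Second-coordinate projection of a relation on a product. -/
def psnd : (X × Y) × (X × Y) → Y × Y := fun p => (p.1.2, p.2.2)

/-- The product coarse structure. -/
def prodCoarse (CX : CoarseStructure X) (CY : CoarseStructure Y) :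
    CoarseStructure (X × Y) where
  IsEnt E := CX.IsEnt (pfst '' E) ∧ CY.IsEnt (psnd '' E)
  subset_mem := fun h hsub =>
    ⟨CX.subset_mem h.1 (Set.image_mono hsub), CY.subset_mem h.2 (Set.image_mono hsub)⟩
  union_mem := fun {E F} h1 h2 => by
    constructor
    · show CX.IsEnt (pfst '' (E ∪ F))
      rw [Set.image_union]; exact CX.union_mem h1.1 h2.1
    · show CY.IsEnt (psnd '' (E ∪ F))
      rw [Set.image_union]; exact CY.union_mem h1.2 h2.2
  diag_mem := by
    constructor
    · exact CX.subset_mem CX.diag_mem (by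
        rintro q ⟨p, hp, rfl⟩
        simp only [Set.mem_setOf_eq] at hp ⊢
        exact congrArg Prod.fst hp)
    · exact CY.subset_mem CY.diag_mem (by
        rintro q ⟨p, hp, rfl⟩
        simp only [Set.mem_setOf_eq] at hp ⊢
        exact congrArg Prod.snd hp)
  inv_mem := fun {E} h => by
    constructor
    · exact CX.subset_mem (CX.inv_mem h.1) (by
        rintro q ⟨p, hp, rfl⟩
        exact ⟨(p.2, p.1), hp, rfl⟩)
    · exact CY.subset_mem (CY.inv_mem h.2) (by
        rintro q ⟨p, hp, rfl⟩
        exact ⟨(p.2, p.1), hp, rfl⟩)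
  comp_mem := fun {E F} hE hF => by
    constructor
    · exact CX.subset_mem (CX.comp_mem hE.1 hF.1) (by
        rintro q ⟨p, ⟨y, h1, h2⟩, rfl⟩
        exact ⟨y.1, ⟨(p.1, y), h1, rfl⟩, ⟨(y, p.2), h2, rfl⟩⟩)
    · exact CY.subset_mem (CY.comp_mem hE.2 hF.2) (by
        rintro q ⟨p, ⟨y, h1, h2⟩, rfl⟩
        exact ⟨y.2, ⟨(p.1, y), h1, rfl⟩, ⟨(y, p.2), h2, rfl⟩⟩)

/-- Game-theoretic coarse property C: Player 2 has a winning strategy. -/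
def GamePropC (C : CoarseStructure X) : Prop :=
  ∃ σ : ℕ → (ℕ → Set (X × X)) → Set (Set X),
    (∀ n : ℕ, ∀ L L' : ℕ → Set (X × X), (∀ i ≤ n, L i = L' i) → σ n L = σ n L') ∧
    ∀ L : ℕ → Set (X × X), (∀ i, C.IsEnt (L i)) →
      ∃ k : ℕ, (∀ i ≤ k, UnifBdd C (σ i L) ∧ LDisj (L i) (σ i L)) ∧
        ∀ x : X, ∃ i ≤ k, ∃ A ∈ σ i L, x ∈ A

/-- coarse property C pulls back along coarsely uniform embeddings;
in particular it is a coarse invariant. -/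
theorem stmt4 {X : Type u} {Y : Type v} (CX : CoarseStructure X) (CY : CoarseStructure Y)
    (f : X → Y) (hf : CoarseUnifEmb CX CY f) (hY : CoarsePropC CY) :
    CoarsePropC CX := by
  obtain ⟨-, hb, hpull⟩ := hf
  intro L hL hmono
  obtain ⟨n, V, hcov, hbdd, hdisj⟩ := hY (fun i => mapProd f '' L i)
    (fun i => hb _ (hL i)) (fun i => Set.image_mono (hmono i))
  refine ⟨n, fun i => (fun B => f ⁻¹' B) '' V i, ?_, ?_, ?_⟩
  · intro x
    obtain ⟨i, hi, B, hB, hx⟩ := hcov (f x)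
    exact ⟨i, hi, f ⁻¹' B, ⟨B, hB, rfl⟩, hx⟩
  · intro i hi
    refine CX.subset_mem (hpull _ (hbdd i hi)) ?_
    rintro ⟨x, x'⟩ hx
    rw [famDiag, Set.mem_iUnion₂] at hx
    obtain ⟨A, ⟨B, hB, rfl⟩, hxA, hxA'⟩ := hx
    exact Set.mem_iUnion₂.mpr ⟨B, hB, hxA, hxA'⟩
  · rintro i hi A ⟨B, hB, rfl⟩ A' ⟨B', hB', rfl⟩ hne
    have hBB' : B ≠ B' := fun h => hne (by rw [h])
    have hemp := hdisj i hi B hB B' hB' hBB'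
    rw [Set.eq_empty_iff_forall_notMem] at hemp ⊢
    rintro ⟨x, x'⟩ ⟨⟨hx, hx'⟩, hxy⟩
    exact hemp (f x, f x') ⟨⟨hx, hx'⟩, ⟨(x, x'), hxy, rfl⟩⟩
end

section
/- Let (X, E) be a coarse space, L a symmetric entourage containing the diagonal, U a uniformly bounded L-disjoint family of subsets of X, and V a uniformly bounded K-disjoint family of subsets of X, where K = L ∪ (L ∘ Δ_U ∘ L) ∪ (L ∘ Δ_U ∘ L ∘ Δ_U ∘ L) and Δ_U = ∪_{U∈U} U × U. Then the L-saturated union V ∪_L U is L-disjoint and uniformly bounded. -/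
open Set
open scoped ENNReal

universe u v

variable {X : Type u} {Y : Type v}

/-- the `L`-saturated union of a uniformly bounded `K`-disjoint family `V`
with a uniformly bounded `L`-disjoint family `U` is `L`-disjoint and uniformly bounded,
where `K = L ∪ (L ∘ Δ_U ∘ L) ∪ (L ∘ Δ_U ∘ L ∘ Δ_U ∘ L)`. -/
theorem stmt6 {X : Type u} (C : CoarseStructure X) (L : Set (X × X))
    (hL : C.IsEnt L) (hsymm : SymmRel L) (hdiag : ∀ x : X, (x, x) ∈ L)
    (U V : Set (Set X))
    (hUb : UnifBdd C U) (hUd : LDisj L U) (hVb : UnifBdd C V)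
    (hVd : LDisj (L ∪ rcomp (rcomp L (famDiag U)) L ∪
      rcomp (rcomp (rcomp (rcomp L (famDiag U)) L) (famDiag U)) L) V) :
    LDisj L (satUnion L V U) ∧ UnifBdd C (satUnion L V U) := by
  set D := famDiag U with hDdef
  set K := L ∪ rcomp (rcomp L D) L ∪
      rcomp (rcomp (rcomp (rcomp L D) L) D) L with hKdef
  have hDmem : ∀ {A : Set X}, A ∈ U → ∀ {a b : X}, a ∈ A → b ∈ A → (a, b) ∈ D := by
    intro A hA a b ha hb
    exact Set.mem_biUnion hA ⟨ha, hb⟩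
  have hNLmem : ∀ (V₀ : Set X) (x : X), x ∈ NL L U V₀ →
      x ∈ V₀ ∨ ∃ A ∈ U, x ∈ A ∧ ∃ a ∈ A, ∃ v ∈ V₀, (a, v) ∈ L := by
    intro V₀ x hx
    rcases hx with hx | hx
    · exact Or.inl hx
    · simp only [mem_iUnion, mem_setOf_eq, exists_prop] at hx
      obtain ⟨A, ⟨hAU, ⟨⟨a, v⟩, ⟨⟨ha, hv⟩, hav⟩⟩⟩, hxA⟩ := hx
      exact Or.inr ⟨A, hAU, hxA, a, ha, v, hv, hav⟩
  have key : ∀ V₁ V₂ : Set X, ∀ x y : X, (x, y) ∈ L → x ∈ NL L U V₁ → y ∈ NL L U V₂ →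
      ∃ v₁ ∈ V₁, ∃ v₂ ∈ V₂, (v₁, v₂) ∈ K := by
    intro V₁ V₂ x y hxy hx hy
    rcases hNLmem V₁ x hx with hxV | ⟨A₁, hA₁, hxA₁, a₁, ha₁, v₁, hv₁, hav₁⟩
    · rcases hNLmem V₂ y hy with hyV | ⟨A₂, hA₂, hyA₂, a₂, ha₂, v₂, hv₂, hav₂⟩
      · exact ⟨x, hxV, y, hyV, Or.inl (Or.inl hxy)⟩
      · exact ⟨x, hxV, v₂, hv₂, Or.inl (Or.inr ⟨a₂, ⟨y, hxy, hDmem hA₂ hyA₂ ha₂⟩, hav₂⟩)⟩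
    · rcases hNLmem V₂ y hy with hyV | ⟨A₂, hA₂, hyA₂, a₂, ha₂, v₂, hv₂, hav₂⟩
      · exact ⟨v₁, hv₁, y, hyV,
          Or.inl (Or.inr ⟨x, ⟨a₁, hsymm _ hav₁, hDmem hA₁ ha₁ hxA₁⟩, hxy⟩)⟩
      · exact ⟨v₁, hv₁, v₂, hv₂,
          Or.inr ⟨a₂, ⟨y, ⟨x, ⟨a₁, hsymm _ hav₁, hDmem hA₁ ha₁ hxA₁⟩, hxy⟩,
            hDmem hA₂ hyA₂ ha₂⟩, hav₂⟩⟩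
  constructor
  · intro W₁ hW₁ W₂ hW₂ hne
    rw [Set.eq_empty_iff_forall_notMem]
    rintro ⟨x, y⟩ ⟨⟨hx, hy⟩, hxy⟩
    simp only [satUnion, mem_union, mem_image, mem_setOf_eq] at hW₁ hW₂
    rcases hW₁ with ⟨V₁, hV₁, rfl⟩ | ⟨hW₁U, hW₁d⟩
    · rcases hW₂ with ⟨V₂, hV₂, rfl⟩ | ⟨hW₂U, hW₂d⟩
      · have hV12 : V₁ ≠ V₂ := fun h => hne (by rw [h])
        obtain ⟨v₁, hv₁, v₂, hv₂, hKv⟩ := key V₁ V₂ x y hxy hx hy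
        have h := hVd V₁ hV₁ V₂ hV₂ hV12
        rw [Set.eq_empty_iff_forall_notMem] at h
        exact h (v₁, v₂) ⟨⟨hv₁, hv₂⟩, hKv⟩
      · rcases hNLmem V₁ x hx with hxV | ⟨A₁, hA₁, hxA₁, a₁, ha₁, v₁, hv₁, hav₁⟩
        · have h := hW₂d V₁ hV₁
          rw [Set.eq_empty_iff_forall_notMem] at h
          exact h (y, x) ⟨⟨hy, hxV⟩, hsymm _ hxy⟩
        · by_cases hAe : W₂ = A₁
          · subst hAe
            have h := hW₂d V₁ hV₁
            rw [Set.eq_empty_iff_forall_notMem] at h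
            exact h (a₁, v₁) ⟨⟨ha₁, hv₁⟩, hav₁⟩
          · have h := hUd W₂ hW₂U A₁ hA₁ hAe
            rw [Set.eq_empty_iff_forall_notMem] at h
            exact h (y, x) ⟨⟨hy, hxA₁⟩, hsymm _ hxy⟩
    · rcases hW₂ with ⟨V₂, hV₂, rfl⟩ | ⟨hW₂U, hW₂d⟩
      · rcases hNLmem V₂ y hy with hyV | ⟨A₂, hA₂, hyA₂, a₂, ha₂, v₂, hv₂, hav₂⟩
        · have h := hW₁d V₂ hV₂
          rw [Set.eq_empty_iff_forall_notMem] at h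
          exact h (x, y) ⟨⟨hx, hyV⟩, hxy⟩
        · by_cases hAe : W₁ = A₂
          · subst hAe
            have h := hW₁d V₂ hV₂
            rw [Set.eq_empty_iff_forall_notMem] at h
            exact h (a₂, v₂) ⟨⟨ha₂, hv₂⟩, hav₂⟩
          · have h := hUd W₁ hW₁U A₂ hA₂ hAe
            rw [Set.eq_empty_iff_forall_notMem] at h
            exact h (x, y) ⟨⟨hx, hyA₂⟩, hxy⟩
      · have h := hUd W₁ hW₁U W₂ hW₂U hne
        rw [Set.eq_empty_iff_forall_notMem] at h
        exact h (x, y) ⟨⟨hx, hy⟩, hxy⟩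
  · -- uniform boundedness
    set M := famDiag V with hMdef
    set F : Set (X × X) := {p : X × X | p.1 = p.2} ∪ rcomp D L with hFdef
    have hFent : C.IsEnt F := C.union_mem C.diag_mem (C.comp_mem hUb hL)
    set Finv : Set (X × X) := {p : X × X | (p.2, p.1) ∈ F} with hFinvdef
    have hFinvent : C.IsEnt Finv := C.inv_mem hFent
    set G : Set (X × X) := rcomp (rcomp F M) Finv ∪ D with hGdef
    have hGent : C.IsEnt G :=
      C.union_mem (C.comp_mem (C.comp_mem hFent hVb) hFinvent) hUb
    have reach : ∀ (V₀ : Set X) (x : X), x ∈ NL L U V₀ → ∃ v ∈ V₀, (x, v) ∈ F := by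
      intro V₀ x hx
      rcases hNLmem V₀ x hx with hxV | ⟨A₁, hA₁, hxA₁, a₁, ha₁, v₁, hv₁, hav₁⟩
      · exact ⟨x, hxV, Or.inl rfl⟩
      · exact ⟨v₁, hv₁, Or.inr ⟨a₁, hDmem hA₁ hxA₁ ha₁, hav₁⟩⟩
    refine C.subset_mem hGent ?_
    rintro ⟨p, q⟩ hpq
    simp only [famDiag, mem_iUnion, exists_prop] at hpq
    obtain ⟨W, hW, hpq2⟩ := hpq
    obtain ⟨hpW, hqW⟩ := hpq2
    simp only [satUnion, mem_union, mem_image, mem_setOf_eq] at hW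
    rcases hW with ⟨V₀, hV₀, rfl⟩ | ⟨hWU, -⟩
    · obtain ⟨v, hv, hpF⟩ := reach V₀ p hpW
      obtain ⟨v', hv', hqF⟩ := reach V₀ q hqW
      exact Or.inl ⟨v', ⟨v, hpF, Set.mem_biUnion hV₀ ⟨hv, hv'⟩⟩, hqF⟩
    · exact Or.inr (hDmem hWU hpW hqW)
end

section
/- If a coarse space (X, E) is a union X = X₁ ∪ X₂ of two subspaces (with the inherited coarse structures) each having coarse property C, then X has coarse property C. -/
open Set
open scoped ENNReal

universe u v

variable {X : Type u} {Y : Type v}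

/-- a union of two subspaces with coarse property C has coarse property C. -/
theorem stmt7 {X : Type u} (C : CoarseStructure X) (S1 S2 : Set X)
    (hcover : S1 ∪ S2 = Set.univ)
    (h1 : CoarsePropCOn C S1) (h2 : CoarsePropCOn C S2) :
    CoarsePropC C := by
  intro L hL hmono
  obtain ⟨n1, U1, _, hcov1, hbd1, hdisj1⟩ := h1 L hL hmono
  obtain ⟨n2, U2, _, hcov2, hbd2, hdisj2⟩ :=
    h2 (fun i => L (i + n1)) (fun i => hL _)
      (fun i => by simpa [Nat.add_right_comm] using hmono (i + n1))
  refine ⟨n1 + n2, fun i => if i < n1 then U1 i else U2 (i - n1), ?_, ?_, ?_⟩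
  · intro x
    rcases (hcover ▸ Set.mem_univ x : x ∈ S1 ∪ S2) with hx | hx
    · obtain ⟨i, hi, A, hA, hxA⟩ := hcov1 x hx
      exact ⟨i, by omega, by simpa [hi] using ⟨A, hA, hxA⟩⟩
    · obtain ⟨i, hi, A, hA, hxA⟩ := hcov2 x hx
      refine ⟨i + n1, by omega, ?_⟩
      simp only [if_neg (by omega : ¬ i + n1 < n1), Nat.add_sub_cancel]
      exact ⟨A, hA, hxA⟩
  · intro i hi
    by_cases h : i < n1
    · simpa [h] using hbd1 i h
    · simpa [h] using hbd2 (i - n1) (by omega)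
  · intro i hi
    by_cases h : i < n1
    · simpa [h] using hdisj1 i h
    · have hd := hdisj2 (i - n1) (by omega)
      have heq : i - n1 + n1 = i := by omega
      rw [heq] at hd
      simpa [h] using hd
end

section
/- If a coarse space (X, E) satisfies as_C X ≤ n (coarse asymptotic dimension at most n), then X has coarse property C. -/
open Set
open scoped ENNReal

universe u v

variable {X : Type u} {Y : Type v}

/-- finite coarse asymptotic dimension implies coarse property C. -/
theorem stmt8 {X : Type u} (C : CoarseStructure X) (n : ℕ)
    (h : CoarseASDimLE C n) : CoarsePropC C := by
  intro L hEnt hMono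
  have hLmono : ∀ i j, i ≤ j → L i ⊆ L j := by
    intro i j hij
    induction hij with
    | refl => exact subset_rfl
    | step _ ih => exact ih.trans (hMono _)
  obtain ⟨U, hcov, hbdd, hdisj⟩ := h (L n) (hEnt n)
  refine ⟨n + 1, U, ?_, ?_, ?_⟩
  · intro x
    obtain ⟨i, hi, A, hA, hx⟩ := hcov x
    exact ⟨i, Nat.lt_succ_of_le hi, A, hA, hx⟩
  · intro i hi
    exact hbdd i (Nat.lt_succ_iff.mp hi)
  · intro i hi A hA B hB hAB
    have := hdisj i (Nat.lt_succ_iff.mp hi) A hA B hB hAB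
    have hsub := hLmono i n (Nat.lt_succ_iff.mp hi)
    exact Set.eq_empty_of_subset_empty (this ▸ Set.inter_subset_inter_right _ hsub)
end

section
/- If a coarse space (X, E) has coarse property C, then X has straight finite coarse decomposition complexity. -/
open Set
open scoped ENNReal

universe u v

variable {X : Type u} {Y : Type v}

lemma entBUnion {X : Type u} (C : CoarseStructure X) (G : ℕ → Set (X × X)) :
    ∀ n : ℕ, (∀ j < n, C.IsEnt (G j)) → C.IsEnt (⋃ j, ⋃ (_ : j < n), G j) := by
  intro n
  induction n with
  | zero => intro _; exact C.subset_mem C.diag_mem (by simp)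
  | succ n ih =>
    intro hh
    have he : (⋃ j, ⋃ (_ : j < n + 1), G j) = (⋃ j, ⋃ (_ : j < n), G j) ∪ G n := by
      ext p
      simp only [Set.mem_iUnion, Set.mem_union, Nat.lt_succ_iff_lt_or_eq]
      constructor
      · rintro ⟨j, hj | rfl, hp⟩
        exacts [Or.inl ⟨j, hj, hp⟩, Or.inr hp]
      · rintro (⟨j, hj, hp⟩ | hp)
        exacts [⟨j, Or.inl hj, hp⟩, ⟨n, Or.inr rfl, hp⟩]
    rw [he]
    exact C.union_mem (ih fun j hj => hh j (hj.trans (Nat.lt_succ_self n)))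
      (hh n (Nat.lt_succ_self n))

/-- coarse property C implies straight finite coarse decomposition
complexity. -/
theorem stmt9 {X : Type u} (C : CoarseStructure X) (h : CoarsePropC C) :
    sFCDC C {Set.univ} := by
  intro L hEnt hmono
  obtain ⟨n, U, hcov, hbdd, hdisj⟩ := h L hEnt hmono
  set Z : ℕ → Set X := fun i => {x | ∀ j < i, ∀ A ∈ U j, x ∉ A} with hZ
  set F : ℕ → Set (Set X) := fun j => (fun A => A ∩ Z j) '' U j with hF
  have hZmono : ∀ i, Z (i + 1) ⊆ Z i := by
    intro i x hx j hj A hA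
    exact hx j (hj.trans (Nat.lt_succ_self i)) A hA
  refine ⟨n, fun i => {S | (∃ j < i, S ∈ F j) ∨ S = Z i}, ?_, ?_, ?_⟩
  · ext S
    have : Z 0 = (Set.univ : Set X) := by
      ext x; simp [hZ]
    simp [this]
  · intro i hi S hS
    rcases hS with ⟨j, hj, hSF⟩ | rfl
    · -- S is an old piece; decompose as itself
      refine ⟨![{S}, ∅], ?_, ?_, ?_⟩
      · intro k
        fin_cases k
        · intro T hT
          rcases hT with rfl
          exact Or.inl ⟨j, hj.trans (Nat.lt_succ_self i), hSF⟩
        · intro T hT; exact absurd hT (Set.notMem_empty T)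
      · intro k
        fin_cases k
        · intro A hA B hB hne
          rcases hA with rfl; rcases hB with rfl; exact absurd rfl hne
        · intro A hA; exact absurd hA (Set.notMem_empty A)
      · ext x
        simp only [Set.mem_iUnion, Fin.exists_fin_two]
        constructor
        · intro hx
          exact Or.inl ⟨S, by simp, hx⟩
        · rintro (⟨A, hA, hx⟩ | ⟨A, hA, hx⟩)
          · simp only [Matrix.cons_val_zero, Set.mem_singleton_iff] at hA
            rwa [hA] at hx
          · simp at hA
    · -- S = Z i
      refine ⟨![F i, {Z (i + 1)}], ?_, ?_, ?_⟩
      · intro k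
        fin_cases k
        · intro T hT
          exact Or.inl ⟨i, Nat.lt_succ_self i, hT⟩
        · intro T hT
          rcases hT with rfl
          exact Or.inr rfl
      · intro k
        fin_cases k
        · -- LDisj (L i) (F i)
          rintro A' ⟨A, hA, rfl⟩ B' ⟨B, hB, rfl⟩ hne
          have hAB : A ≠ B := by rintro rfl; exact hne rfl
          have := hdisj i hi A hA B hB hAB
          apply Set.eq_empty_of_subset_empty
          rintro p ⟨hp1, hp2⟩
          have : p ∈ (A ×ˢ B) ∩ L i :=
            ⟨⟨hp1.1.1, hp1.2.1⟩, hp2⟩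
          rw [hdisj i hi A hA B hB hAB] at this
          exact this
        · intro A hA B hB hne
          rcases hA with rfl; rcases hB with rfl; exact absurd rfl hne
      · ext x
        simp only [Set.mem_iUnion, Fin.exists_fin_two, Matrix.cons_val_zero,
          Matrix.cons_val_one, Matrix.head_cons, Set.mem_singleton_iff]
        constructor
        · intro hx
          by_cases hc : ∃ A ∈ U i, x ∈ A
          · obtain ⟨A, hA, hxA⟩ := hc
            exact Or.inl ⟨A ∩ Z i, ⟨A, hA, rfl⟩, hxA, hx⟩
          · refine Or.inr ⟨Z (i + 1), rfl, ?_⟩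
            intro j hj A hA hxA
            rcases Nat.lt_succ_iff_lt_or_eq.mp hj with hj' | rfl
            · exact hx j hj' A hA hxA
            · exact hc ⟨A, hA, hxA⟩
        · rintro (⟨A', ⟨A, hA, rfl⟩, hx⟩ | ⟨A, rfl, hx⟩)
          · exact hx.2
          · exact hZmono i hx
  · -- UnifBdd C (Y n)
    have hent : C.IsEnt (⋃ j, ⋃ (_ : j < n), famDiag (U j)) :=
      entBUnion C (fun j => famDiag (U j)) n (fun j hj => hbdd j hj)
    refine C.subset_mem hent ?_
    rintro p hp
    simp only [famDiag, Set.mem_iUnion] at hp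
    obtain ⟨A, hA, hpA⟩ := hp
    rcases hA with ⟨j, hj, B, hB, rfl⟩ | rfl
    · simp only [Set.mem_iUnion]
      refine ⟨j, hj, ?_⟩
      simp only [famDiag, Set.mem_iUnion]
      exact ⟨B, hB, hpA.1.1, hpA.2.1⟩
    · exfalso
      obtain ⟨i, hi, A, hA, hx⟩ := hcov p.1
      exact hpA.1 i hi A hA hx
end

section
/- If a coarse space (X, E) satisfies as_C X ≤ n (finite coarse asymptotic dimension), then X has finite weak coarse decomposition complexity; in fact, for every entourage L the space X admits a weak (L, n+1)-decomposition over a uniformly bounded family. -/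
open Set
open scoped ENNReal

universe u v

variable {X : Type u} {Y : Type v}

theorem stmt10_aux {X : Type u} (C : CoarseStructure X) (G : ℕ → Set (X × X)) :
    ∀ m, (∀ i ≤ m, C.IsEnt (G i)) → C.IsEnt (⋃ i ∈ {j | j ≤ m}, G i) := by
  intro m
  induction m with
  | zero =>
    intro hG
    refine C.subset_mem (hG 0 le_rfl) ?_
    intro p hp
    simp only [Set.mem_iUnion, Set.mem_setOf_eq, Nat.le_zero] at hp
    obtain ⟨i, rfl, hpi⟩ := hp
    exact hpi
  | succ m ih =>
    intro hG
    have h1 := ih (fun i hi => hG i (hi.trans (Nat.le_succ m)))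
    have h2 := hG (m + 1) le_rfl
    refine C.subset_mem (C.union_mem h1 h2) ?_
    intro p hp
    simp only [Set.mem_iUnion, Set.mem_setOf_eq] at hp
    obtain ⟨i, hi, hpi⟩ := hp
    rcases Nat.lt_succ_iff_lt_or_eq.mp (Nat.lt_succ_of_le hi) with hi' | rfl
    · left
      simp only [Set.mem_iUnion, Set.mem_setOf_eq]
      exact ⟨i, Nat.lt_succ_iff.mp hi', hpi⟩
    · right; exact hpi

/-- coarse asymptotic dimension at most `n` implies finite weak coarse
decomposition complexity; in fact for each entourage `L` the space admits a weak
`(L, n+1)`-decomposition over a uniformly bounded family. -/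
theorem stmt10 {X : Type u} (C : CoarseStructure X) (n : ℕ)
    (h : CoarseASDimLE C n) :
    FWCDC C ∧
      ∀ L : Set (X × X), C.IsEnt L →
        ∃ Y : Set (Set X), UnifBdd C Y ∧ WeakDecomp L (n + 1) Set.univ Y := by
  have main : ∀ L : Set (X × X), C.IsEnt L →
      ∃ Y : Set (Set X), UnifBdd C Y ∧ WeakDecomp L (n + 1) Set.univ Y := by
    intro L hL
    obtain ⟨U, hcov, hbdd, hdisj⟩ := h L hL
    refine ⟨⋃ i ∈ {j | j ≤ n}, U i, ?_, ?_⟩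
    · -- uniformly bounded
      have key : C.IsEnt (⋃ i ∈ {j | j ≤ n}, famDiag (U i)) :=
        stmt10_aux C (fun i => famDiag (U i)) n (fun i hi => hbdd i hi)
      refine C.subset_mem key ?_
      intro p hp
      simp only [famDiag, Set.mem_iUnion, Set.mem_setOf_eq] at hp ⊢
      obtain ⟨A, ⟨i, hi, hAU⟩, hpA⟩ := hp
      exact ⟨i, hi, A, hAU, hpA⟩
    · -- weak decomposition
      refine ⟨fun i : Fin (n + 1) => U i, ?_, ?_, ?_⟩
      · intro i A hA
        simp only [Set.mem_iUnion, Set.mem_setOf_eq]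
        exact ⟨i, Nat.lt_succ_iff.mp i.isLt, hA⟩
      · intro i
        exact hdisj i (Nat.lt_succ_iff.mp i.isLt)
      · ext x
        simp only [Set.mem_univ, true_iff, Set.mem_iUnion]
        obtain ⟨i, hi, A, hA, hx⟩ := hcov x
        exact ⟨⟨i, Nat.lt_succ_of_le hi⟩, A, hA, hx⟩
  refine ⟨?_, main⟩
  intro L hL
  obtain ⟨Y, hY1, hY2⟩ := main L hL
  exact ⟨n + 1, Y, hY1, hY2⟩
end

section
/- Let X, Y, Z be families of subspaces of a coarse space (W, E), and let L₁, L₂ be entourages. If X admits a weak (L₁, d₁)-decomposition over Y and Y admits a weak (L₂, d₂)-decomposition over Z, then X admits a weak (L₁ ∩ L₂, d₁·d₂)-decomposition over Z. -/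
open Set
open scoped ENNReal

universe u v

variable {X : Type u} {Y : Type v}

/-- composing a weak `(L₁,d₁)`-decomposition with a weak
`(L₂,d₂)`-decomposition yields a weak `(L₁ ∩ L₂, d₁·d₂)`-decomposition. -/
theorem stmt11 {W : Type u} (C : CoarseStructure W) (L1 L2 : Set (W × W))
    (hL1 : C.IsEnt L1) (hL2 : C.IsEnt L2)
    (FX FY FZ : Set (Set W)) (d1 d2 : ℕ)
    (hXY : FamDecomp L1 d1 FX FY) (hYZ : FamDecomp L2 d2 FY FZ) :
    FamDecomp (L1 ∩ L2) (d1 * d2) FX FZ := by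
  intro Z hZ
  obtain ⟨P, hPsub, hPdisj, hPeq⟩ := hXY Z hZ
  choose Q hQsub hQdisj hQeq using hYZ
  -- subsets of pieces: B ∈ Q A hA j → B ⊆ A
  have hBsub : ∀ (A : Set W) (hA : A ∈ FY) (j : Fin d2) (B : Set W),
      B ∈ Q A hA j → B ⊆ A := by
    intro A hA j B hB
    rw [hQeq A hA]
    intro x hx
    exact Set.mem_iUnion.2 ⟨j, Set.mem_iUnion.2 ⟨B, Set.mem_iUnion.2 ⟨hB, hx⟩⟩⟩
  classical
  let e := finProdFinEquiv (m := d1) (n := d2)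
  refine ⟨fun k => {B | ∃ A, ∃ hA : A ∈ FY, A ∈ P (e.symm k).1 ∧
    B ∈ Q A hA (e.symm k).2}, ?_, ?_, ?_⟩
  · rintro k B ⟨A, hA, _, hB⟩
    exact hQsub A hA (e.symm k).2 hB
  · rintro k B ⟨A, hA, hAP, hB⟩ B' ⟨A', hA', hAP', hB'⟩ hne
    by_cases hAA : A = A'
    · subst hAA
      have := hQdisj A hA (e.symm k).2 B hB B' (by
        have : (fun hA => Q A hA) hA = (fun hA => Q A hA) hA' := rfl
        simpa using hB') hne
      apply Set.eq_empty_of_subset_empty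
      rw [← this]
      exact Set.inter_subset_inter_right _ Set.inter_subset_right
    · have h1 := hPdisj (e.symm k).1 A hAP A' hAP' hAA
      apply Set.eq_empty_of_subset_empty
      rw [← h1]
      intro p hp
      exact ⟨⟨hBsub A hA _ B hB hp.1.1, hBsub A' hA' _ B' hB' hp.1.2⟩, hp.2.1⟩
  · rw [hPeq]
    ext x
    simp only [Set.mem_iUnion, Set.mem_setOf_eq]
    constructor
    · rintro ⟨i, A, hAP, hx⟩
      have hA : A ∈ FY := hPsub i hAP
      have := hQeq A hA
      rw [this] at hx
      simp only [Set.mem_iUnion] at hx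
      obtain ⟨j, B, hB, hxB⟩ := hx
      refine ⟨e (i, j), B, ⟨A, hA, ?_, ?_⟩, hxB⟩
      · rw [Equiv.symm_apply_apply]; exact hAP
      · rw [Equiv.symm_apply_apply]; exact hB
    · rintro ⟨k, B, ⟨A, hA, hAP, hB⟩, hxB⟩
      exact ⟨(e.symm k).1, A, hAP, hBsub A hA _ B hB hxB⟩
end

section
/- If a coarse space (X, E) has straight finite coarse decomposition complexity, then X has finite weak coarse decomposition complexity: for every entourage L there exists d and a uniformly bounded family Y such that X admits a weak (L, d)-decomposition over Y. -/
open Set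
open scoped ENNReal

universe u v

variable {X : Type u} {Y : Type v}

lemma weakDecomp_comp {L : Set (X × X)} {d : ℕ} {Z : Set X} {Y Y' : Set (Set X)}
    (h1 : WeakDecomp L d Z Y) (h2 : FamDecomp L 2 Y Y') : WeakDecomp L (d * 2) Z Y' := by
  obtain ⟨P, hPsub, hPdisj, hPcov⟩ := h1
  choose Q hQsub hQdisj hQcov using h2
  set R : Fin d × Fin 2 → Set (Set X) := fun p =>
    {B | ∃ A, ∃ hA : A ∈ P p.1, B ∈ Q A (hPsub p.1 hA) p.2} with hR
  have memsub : ∀ (A : Set X) (hA : A ∈ Y) (j : Fin 2) (B : Set X),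
      B ∈ Q A hA j → B ⊆ A := by
    intro A hA j B hB x hx
    rw [hQcov A hA]
    exact Set.mem_iUnion.mpr ⟨j, Set.mem_iUnion.mpr ⟨B, Set.mem_iUnion.mpr ⟨hB, hx⟩⟩⟩
  refine ⟨fun k => R (finProdFinEquiv.symm k), ?_, ?_, ?_⟩
  · rintro k B ⟨A, hA, hB⟩
    exact hQsub A _ _ hB
  · rintro k B ⟨A, hA, hB⟩ B' ⟨A', hA', hB'⟩ hne
    by_cases hAA : A = A'
    · subst hAA
      -- same A but possibly different proofs; proofs are irrelevant
      exact hQdisj A (hPsub _ hA) _ B hB B' hB' hne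
    · have hAB : (A ×ˢ A') ∩ L = ∅ := hPdisj _ A hA A' hA' hAA
      apply Set.eq_empty_of_subset_empty
      rw [← hAB]
      apply Set.inter_subset_inter_left
      rintro ⟨x, y⟩ ⟨hx, hy⟩
      exact ⟨memsub A _ _ B hB hx, memsub A' _ _ B' hB' hy⟩
  · ext x
    simp only [Set.mem_iUnion]
    constructor
    · intro hx
      have : x ∈ ⋃ i, ⋃ A ∈ P i, A := by rw [← hPcov]; exact hx
      simp only [Set.mem_iUnion] at this
      obtain ⟨i, A, hA, hxA⟩ := this
      have : x ∈ ⋃ j, ⋃ B ∈ Q A (hPsub i hA) j, B := by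
        rw [← hQcov A (hPsub i hA)]; exact hxA
      simp only [Set.mem_iUnion] at this
      obtain ⟨j, B, hB, hxB⟩ := this
      refine ⟨finProdFinEquiv (i, j), B, ?_, hxB⟩
      rw [hR]
      simp only [Equiv.symm_apply_apply]
      exact ⟨A, hA, hB⟩
    · rintro ⟨k, B, ⟨A, hA, hB⟩, hxB⟩
      rw [hPcov]
      exact Set.mem_iUnion.mpr ⟨_, Set.mem_iUnion.mpr ⟨A, Set.mem_iUnion.mpr
        ⟨hA, memsub A _ _ B hB hxB⟩⟩⟩

lemma weakDecomp_univ_one {L : Set (X × X)} : WeakDecomp L 1 Set.univ {Set.univ} := by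
  refine ⟨fun _ => {Set.univ}, fun _ => subset_rfl, ?_, ?_⟩
  · intro i A hA B hB hne
    simp only [Set.mem_singleton_iff] at hA hB
    exact absurd (hA.trans hB.symm) hne
  · simp only [Set.mem_singleton_iff, Set.iUnion_iUnion_eq_left]
    exact (Set.iUnion_const _).symm

/-- straight finite coarse decomposition complexity implies finite weak
coarse decomposition complexity. -/
theorem stmt12 {X : Type u} (C : CoarseStructure X)
    (h : sFCDC C {Set.univ}) : FWCDC C := by
  intro L hL
  obtain ⟨n, Ys, hY0, hstep, hbdd⟩ := h (fun _ => L) (fun _ => hL) (fun _ => subset_rfl)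
  have key : ∀ i ≤ n, WeakDecomp L (2 ^ i) Set.univ (Ys i) := by
    intro i
    induction i with
    | zero =>
      intro _
      rw [hY0, pow_zero]
      exact weakDecomp_univ_one
    | succ i ih =>
      intro hi
      have h1 := ih (Nat.le_of_succ_le hi)
      have h2 := hstep i (Nat.lt_of_succ_le hi)
      rw [pow_succ]
      exact weakDecomp_comp h1 h2
  exact ⟨2 ^ n, Ys n, hbdd, key n le_rfl⟩
end

section
/- Let f : X → Y be a bornologous map of coarse spaces. If Y has straight finite coarse decomposition complexity and for every uniformly bounded family V of subsets of Y the family f⁻¹(V) = {f⁻¹(V) : V ∈ V} has straight finite coarse decomposition complexity, then X has straight finite coarse decomposition complexity. -/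
open Set
open scoped ENNReal

universe u v

variable {X : Type u} {Y : Type v}

/-- Pullback of a family decomposition along a map. -/
lemma famDecomp_pull {X : Type u} {Y : Type v} (f : X → Y) (L : Set (X × X))
    (M : Set (Y × Y)) (h : ∀ p ∈ L, mapProd f p ∈ M) (F G : Set (Set Y))
    (hFG : FamDecomp M 2 F G) :
    FamDecomp L 2 ((fun A => f ⁻¹' A) '' F) ((fun A => f ⁻¹' A) '' G) := by
  rintro _ ⟨B, hB, rfl⟩
  obtain ⟨P, hPsub, hPdisj, hPun⟩ := hFG B hB
  refine ⟨fun j => (fun A => f ⁻¹' A) '' (P j), fun j => Set.image_mono (hPsub j),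
    ?_, ?_⟩
  · rintro j _ ⟨A, hA, rfl⟩ _ ⟨A', hA', rfl⟩ hne
    rw [Set.eq_empty_iff_forall_notMem]
    rintro ⟨x, x'⟩ ⟨⟨hx, hx'⟩, hL⟩
    have hAA' : A ≠ A' := fun he => hne (by rw [he])
    have := hPdisj j A hA A' hA' hAA'
    have : (f x, f x') ∈ (A ×ˢ A') ∩ M := ⟨⟨hx, hx'⟩, h _ hL⟩
    rw [hPdisj j A hA A' hA' hAA'] at this
    exact this
  · rw [hPun]
    ext x
    simp only [Set.mem_preimage, Set.mem_iUnion, Set.biUnion_image, Set.mem_preimage]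

/-- fibering: if `f : X → Y` is bornologous, `Y` has straight finite
coarse decomposition complexity, and the preimage family of every uniformly bounded
family of subsets of `Y` has straight finite coarse decomposition complexity, then so
does `X`. -/
theorem stmt15 {X : Type u} {Y : Type v} (CX : CoarseStructure X) (CY : CoarseStructure Y)
    (f : X → Y) (hf : Bornologous CX CY f)
    (hY : sFCDC CY {Set.univ})
    (hfib : ∀ V : Set (Set Y), UnifBdd CY V → sFCDC CX ((fun A => f ⁻¹' A) '' V)) :
    sFCDC CX {Set.univ} := by
  intro L hL hLmono
  -- push forward the entourage sequence
  set M : ℕ → Set (Y × Y) := fun i => mapProd f '' (L i) with hM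
  have hMent : ∀ i, CY.IsEnt (M i) := fun i => hf _ (hL i)
  have hMmono : ∀ i, M i ⊆ M (i + 1) := fun i => Set.image_mono (hLmono i)
  obtain ⟨m, W, hW0, hWdec, hWbdd⟩ := hY M hMent hMmono
  -- the pullback families
  set W' : ℕ → Set (Set X) := fun i => (fun A => f ⁻¹' A) '' (W i) with hW'
  -- apply the fiber hypothesis to the bounded family `W m`, using the shifted sequence
  obtain ⟨k, Z, hZ0, hZdec, hZbdd⟩ :=
    hfib (W m) hWbdd (fun i => L (m + i)) (fun i => hL _) (fun i => hLmono _)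
  refine ⟨m + k, fun i => if i < m then W' i else Z (i - m), ?_, ?_, ?_⟩
  · by_cases hm : 0 < m
    · simp only [if_pos hm]
      show (fun A => f ⁻¹' A) '' W 0 = {Set.univ}
      rw [hW0, Set.image_singleton, Set.preimage_univ]
    · have h0 : m = 0 := by omega
      subst h0
      simp only [if_neg (lt_irrefl 0), Nat.sub_self]
      rw [hZ0, hW0, Set.image_singleton, Set.preimage_univ]
  · intro i hi
    by_cases h1 : i + 1 ≤ m
    · have hi' : i < m := by omega
      have h2 : i + 1 < m ∨ i + 1 = m := by omega
      have key : FamDecomp (L i) 2 (W' i) (W' (i + 1)) :=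
        famDecomp_pull f (L i) (M i) (fun p hp => ⟨p, hp, rfl⟩) _ _
          (hWdec i (by omega))
      rcases h2 with h2 | h2
      · simpa [hi', h2] using key
      · have : Z (i + 1 - m) = W' (i + 1) := by
          rw [h2]; simp [hZ0, hW']
        simp only [hi', if_pos, if_neg (by omega : ¬ i + 1 < m)]
        rw [this]
        exact key
    · have hi1 : ¬ i < m := by omega
      have hi2 : ¬ i + 1 < m := by omega
      simp only [if_neg hi1, if_neg hi2]
      have := hZdec (i - m) (by omega)
      have e1 : m + (i - m) = i := by omega
      have e2 : i - m + 1 = i + 1 - m := by omega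
      rw [e1, e2] at this
      exact this
  · simp only [if_neg (by omega : ¬ m + k < m)]
    have e : m + k - m = k := by omega
    rw [e]
    exact hZbdd
end

section
/- Let (X, E) and (Y, F) be coarse spaces with straight finite coarse decomposition complexity, and give Z = X × Y the product coarse structure. Then Z has straight finite coarse decomposition complexity. -/
open Set
open scoped ENNReal

universe u v

variable {X : Type u} {Y : Type v}

lemma ldisj_prod_univ {L : Set ((X × Y) × (X × Y))} {P : Set (Set X)}
    (h : LDisj (pfst '' L) P) :
    LDisj L ((fun A => A ×ˢ (Set.univ : Set Y)) '' P) := by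
  rintro _ ⟨A, hA, rfl⟩ _ ⟨A', hA', rfl⟩ hne
  have hAA' : A ≠ A' := by rintro rfl; exact hne rfl
  have hd := h A hA A' hA' hAA'
  rw [Set.eq_empty_iff_forall_notMem] at hd ⊢
  rintro p ⟨⟨⟨h1, -⟩, h2, -⟩, hpL⟩
  exact hd (p.1.1, p.2.1) ⟨⟨h1, h2⟩, ⟨p, hpL, rfl⟩⟩

lemma ldisj_univ_prod {L : Set ((X × Y) × (X × Y))} {P : Set (Set Y)} {A : Set X}
    (h : LDisj (psnd '' L) P) :
    LDisj L ((fun B => A ×ˢ B) '' P) := by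
  rintro _ ⟨B, hB, rfl⟩ _ ⟨B', hB', rfl⟩ hne
  have hBB' : B ≠ B' := by rintro rfl; exact hne rfl
  have hd := h B hB B' hB' hBB'
  rw [Set.eq_empty_iff_forall_notMem] at hd ⊢
  rintro p ⟨⟨⟨-, h1⟩, -, h2⟩, hpL⟩
  exact hd (p.1.2, p.2.2) ⟨⟨h1, h2⟩, ⟨p, hpL, rfl⟩⟩

/-- a product of two coarse spaces with straight finite coarse
decomposition complexity has straight finite coarse decomposition complexity. -/
theorem stmt16 {X : Type u} {Y : Type v} (CX : CoarseStructure X) (CY : CoarseStructure Y)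
    (hX : sFCDC CX {Set.univ}) (hY : sFCDC CY {Set.univ}) :
    sFCDC (prodCoarse CX CY) {(Set.univ : Set (X × Y))} := by
  intro L hEnt hMono
  obtain ⟨n, YX, hYX0, hYXdec, hYXbdd⟩ := hX (fun i => pfst '' L i)
    (fun i => (hEnt i).1) (fun i => Set.image_mono (hMono i))
  obtain ⟨m, YY, hYY0, hYYdec, hYYbdd⟩ := hY (fun j => psnd '' L (n + j))
    (fun j => (hEnt (n + j)).2)
    (fun j => by
      show psnd '' L (n + j) ⊆ psnd '' L (n + (j + 1))
      have : n + (j + 1) = (n + j) + 1 := by omega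
      rw [this]
      exact Set.image_mono (hMono (n + j)))
  refine ⟨n + m, fun i => if i < n then (fun A => A ×ˢ (Set.univ : Set Y)) '' YX i
    else {S | ∃ A ∈ YX n, ∃ B ∈ YY (i - n), S = A ×ˢ B}, ?_, ?_, ?_⟩
  · show (if 0 < n then (fun A => A ×ˢ (Set.univ : Set Y)) '' YX 0
      else {S | ∃ A ∈ YX n, ∃ B ∈ YY (0 - n), S = A ×ˢ B}) = {Set.univ}
    by_cases hn : 0 < n
    · rw [if_pos hn, hYX0, Set.image_singleton, Set.univ_prod_univ]
    · have hn0 : n = 0 := by omega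
      subst hn0
      rw [if_neg (by omega : ¬ (0:ℕ) < 0)]
      ext S
      simp [hYX0, hYY0, Set.univ_prod_univ]
  · intro i hi Z hZ
    by_cases hin : i < n
    · -- X-direction step
      simp only [if_pos hin] at hZ
      obtain ⟨A, hA, rfl⟩ := hZ
      obtain ⟨P, hPsub, hPdisj, hPun⟩ := hYXdec i hin A hA
      refine ⟨fun k => (fun A' => A' ×ˢ (Set.univ : Set Y)) '' P k, ?_, ?_, ?_⟩
      · intro k S hS
        obtain ⟨A', hA', rfl⟩ := hS
        have hA'' := hPsub k hA'
        by_cases h1 : i + 1 < n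
        · simp only [if_pos h1]
          exact ⟨A', hA'', rfl⟩
        · have hieq : i + 1 = n := by omega
          simp only [if_neg (by omega : ¬ i + 1 < n)]
          exact ⟨A', by rwa [hieq] at hA'',
            Set.univ, by simp [hieq, hYY0], rfl⟩
      · intro k
        exact ldisj_prod_univ (hPdisj k)
      · ext ⟨x, y⟩
        rw [hPun] at hA ⊢
        simp only [Set.mem_prod, Set.mem_iUnion, Set.mem_univ, and_true,
          Set.mem_image, exists_prop]
        constructor
        · rintro ⟨k, A', hA', hx⟩
          exact ⟨k, _, ⟨A', hA', rfl⟩, hx, trivial⟩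
        · rintro ⟨k, _, ⟨A', hA', rfl⟩, hx, -⟩
          exact ⟨k, A', hA', hx⟩
    · -- Y-direction step
      simp only [if_neg hin] at hZ
      obtain ⟨A, hA, B, hB, rfl⟩ := hZ
      have hjm : i - n < m := by omega
      obtain ⟨P, hPsub, hPdisj, hPun⟩ := hYYdec (i - n) hjm B hB
      have hni : n + (i - n) = i := by omega
      rw [hni] at hPdisj
      refine ⟨fun k => (fun B' => A ×ˢ B') '' P k, ?_, ?_, ?_⟩
      · intro k S hS
        obtain ⟨B', hB', rfl⟩ := hS
        simp only [if_neg (by omega : ¬ i + 1 < n)]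
        refine ⟨A, hA, B', ?_, rfl⟩
        have : i + 1 - n = i - n + 1 := by omega
        rw [this]
        exact hPsub k hB'
      · intro k
        exact ldisj_univ_prod (hPdisj k)
      · ext ⟨x, y⟩
        rw [hPun]
        simp only [Set.mem_prod, Set.mem_iUnion, Set.mem_image, exists_prop]
        constructor
        · rintro ⟨hx, k, B', hB', hy⟩
          exact ⟨k, _, ⟨B', hB', rfl⟩, hx, hy⟩
        · rintro ⟨k, _, ⟨B', hB', rfl⟩, hx, hy⟩
          exact ⟨hx, k, B', hB', hy⟩
  · -- final family uniformly bounded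
    simp only [if_neg (by omega : ¬ n + m < n), Nat.add_sub_cancel_left]
    constructor
    · refine CX.subset_mem hYXbdd ?_
      rintro q ⟨p, hp, rfl⟩
      simp only [famDiag, Set.mem_iUnion] at hp ⊢
      obtain ⟨S, ⟨A, hA, B, hB, rfl⟩, ⟨h1x, -⟩, h2x, -⟩ := hp
      exact ⟨A, hA, h1x, h2x⟩
    · refine CY.subset_mem hYYbdd ?_
      rintro q ⟨p, hp, rfl⟩
      simp only [famDiag, Set.mem_iUnion] at hp ⊢
      obtain ⟨S, ⟨A, hA, B, hB, rfl⟩, ⟨-, h1y⟩, -, h2y⟩ := hp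
      exact ⟨B, hB, h1y, h2y⟩
end

section
/- If X = X₁ ∪ X₂ is a coarse space and both X₁ and X₂ (with inherited coarse structures) have straight finite coarse decomposition complexity, then X has straight finite coarse decomposition complexity. -/
open Set
open scoped ENNReal

universe u v

variable {X : Type u} {Y : Type v}

lemma ldisj_singleton (L : Set (X × X)) (Z : Set X) : LDisj L {Z} := by
  intro A hA B hB hne
  simp only [Set.mem_singleton_iff] at hA hB
  exact absurd (hA.trans hB.symm) hne

lemma ldisj_empty (L : Set (X × X)) : LDisj L (∅ : Set (Set X)) := by
  intro A hA; exact absurd hA (Set.notMem_empty A)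

lemma weakDecomp_mono {L : Set (X × X)} {d : ℕ} {Z : Set X} {U V : Set (Set X)}
    (hUV : U ⊆ V) (h : WeakDecomp L d Z U) : WeakDecomp L d Z V := by
  obtain ⟨P, hP1, hP2, hP3⟩ := h
  exact ⟨P, fun i => (hP1 i).trans hUV, hP2, hP3⟩

lemma weakDecomp_self {L : Set (X × X)} {Z : Set X} {U : Set (Set X)}
    (hZ : Z ∈ U) : WeakDecomp L 2 Z U := by
  refine ⟨![{Z}, ∅], ?_, ?_, ?_⟩
  · intro i
    fin_cases i
    · simpa using hZ
    · simp
  · intro i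
    fin_cases i
    · exact ldisj_singleton L Z
    · exact ldisj_empty L
  · ext x
    simp [Fin.exists_fin_two]

lemma famDiag_union (U V : Set (Set X)) :
    famDiag (U ∪ V) = famDiag U ∪ famDiag V := by
  unfold famDiag
  exact Set.biUnion_union U V _

/-- a union of two subspaces with straight finite coarse decomposition
complexity has straight finite coarse decomposition complexity. -/
theorem stmt17 {X : Type u} (C : CoarseStructure X) (S1 S2 : Set X)
    (hcover : S1 ∪ S2 = Set.univ)
    (h1 : sFCDC C {S1}) (h2 : sFCDC C {S2}) :
    sFCDC C {Set.univ} := by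
  intro L hEnt hMono
  obtain ⟨n1, Ya, hYa0, hYaD, hYaB⟩ :=
    h1 (fun i => L (i + 1)) (fun i => hEnt _) (fun i => hMono _)
  obtain ⟨n2, Yb, hYb0, hYbD, hYbB⟩ :=
    h2 (fun i => L (i + 1)) (fun i => hEnt _) (fun i => hMono _)
  refine ⟨max n1 n2 + 1,
    fun i => Nat.casesOn i {Set.univ}
      (fun j => Ya (min j n1) ∪ Yb (min j n2)), rfl, ?_, ?_⟩
  · intro i hi
    match i with
    | 0 =>
      intro Z hZ
      simp only [Set.mem_singleton_iff] at hZ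
      subst hZ
      refine ⟨![{S1}, {S2}], ?_, ?_, ?_⟩
      · intro i
        fin_cases i
        · intro A hA
          simp only [Matrix.cons_val_zero, Set.mem_singleton_iff] at hA
          subst hA
          exact Or.inl (by rw [Nat.zero_min, hYa0]; rfl)
        · intro A hA
          simp only [Matrix.cons_val_one, Matrix.head_cons, Set.mem_singleton_iff] at hA
          subst hA
          exact Or.inr (by rw [Nat.zero_min, hYb0]; rfl)
      · intro i
        fin_cases i
        · exact ldisj_singleton _ _
        · exact ldisj_singleton _ _
      · ext x
        simp [Fin.exists_fin_two, ← hcover]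
    | j + 1 =>
      intro Z hZ
      rcases hZ with hZ | hZ
      · rcases lt_or_ge j n1 with hj | hj
        · rw [Nat.min_eq_left hj.le] at hZ
          have := hYaD j hj Z hZ
          refine weakDecomp_mono ?_ this
          show Ya (j + 1) ⊆ Ya (min (j + 1) n1) ∪ Yb (min (j + 1) n2)
          rw [Nat.min_eq_left hj]
          exact Set.subset_union_left
        · have h1' : min j n1 = n1 := Nat.min_eq_right hj
          have h2' : min (j + 1) n1 = n1 := Nat.min_eq_right (hj.trans (Nat.le_succ j))
          refine weakDecomp_self (Or.inl ?_)
          rw [h2', ← h1']; exact hZ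
      · rcases lt_or_ge j n2 with hj | hj
        · rw [Nat.min_eq_left hj.le] at hZ
          have := hYbD j hj Z hZ
          refine weakDecomp_mono ?_ this
          show Yb (j + 1) ⊆ Ya (min (j + 1) n1) ∪ Yb (min (j + 1) n2)
          rw [Nat.min_eq_left hj]
          exact Set.subset_union_right
        · have h1' : min j n2 = n2 := Nat.min_eq_right hj
          have h2' : min (j + 1) n2 = n2 := Nat.min_eq_right (hj.trans (Nat.le_succ j))
          refine weakDecomp_self (Or.inr ?_)
          rw [h2', ← h1']; exact hZ
  · show UnifBdd C (Ya (min (max n1 n2) n1) ∪ Yb (min (max n1 n2) n2))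
    rw [Nat.min_eq_right (le_max_left n1 n2), Nat.min_eq_right (le_max_right n1 n2)]
    unfold UnifBdd
    rw [famDiag_union]
    exact C.union_mem hYaB hYbB
end
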